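/- Let a, b, c be nonzero complex numbers and p, q, r complex numbers. In PSL(2,ℂ), the product g_{ij}·(α^j)·g_{jk}·(α^k)·g_{ki}·(α^i) equals the identity, where g_{ij} = [[0, −a⁻¹],[a, 0]], g_{jk} = [[0, −b⁻¹],[b, 0]], g_{ki} = [[0, −c⁻¹],[c, 0]], and (α^j) = [[1,p],[0,1]], (α^k) = [[1,q],[0,1]], (α^i) = [[1,r],[0,1]], if and only if a⁻² = r·p, b⁻² = p·q, and c⁻² = q·r. -/

import Mathlib

/-- in PSL(2,ℂ) (i.e. up to sign in SL(2,ℂ)), the product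
`g_{ij}·(α^j)·g_{jk}·(α^k)·g_{ki}·(α^i)` of the three counter-diagonal matrices
`[[0,−a⁻¹],[a,0]]`, `[[0,−b⁻¹],[b,0]]`, `[[0,−c⁻¹],[c,0]]` interleaved with the
unipotent matrices `[[1,p],[0,1]]`, `[[1,q],[0,1]]`, `[[1,r],[0,1]]` equals the
identity if and only if `a⁻² = r·p`, `b⁻² = p·q`, `c⁻² = q·r`. -/
theorem hexagon_product_eq_one_iff (a b c p q r : ℂ)
    (ha : a ≠ 0) (hb : b ≠ 0) (hc : c ≠ 0) :
    (!![(0:ℂ), -a⁻¹; a, 0] * !![1, p; 0, 1] * !![(0:ℂ), -b⁻¹; b, 0] * !![1, q; 0, 1] *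
        !![(0:ℂ), -c⁻¹; c, 0] * !![1, r; 0, 1] = 1 ∨
      !![(0:ℂ), -a⁻¹; a, 0] * !![1, p; 0, 1] * !![(0:ℂ), -b⁻¹; b, 0] * !![1, q; 0, 1] *
        !![(0:ℂ), -c⁻¹; c, 0] * !![1, r; 0, 1] = -1) ↔
    ((a ^ 2)⁻¹ = r * p ∧ (b ^ 2)⁻¹ = p * q ∧ (c ^ 2)⁻¹ = q * r) := by
  have key : !![(0:ℂ), -a⁻¹; a, 0] * !![1, p; 0, 1] * !![(0:ℂ), -b⁻¹; b, 0] * !![1, q; 0, 1] *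
        !![(0:ℂ), -c⁻¹; c, 0] * !![1, r; 0, 1] =
      !![-(b*c*q)*a⁻¹, b*a⁻¹*c⁻¹ - b*c*q*r*a⁻¹;
         a*b*c*p*q - a*c*b⁻¹, (a*b*c*p*q - a*c*b⁻¹)*r - a*b*p*c⁻¹] := by
    ext i j
    fin_cases i <;> fin_cases j <;>
      simp [Matrix.mul_apply, Fin.sum_univ_two] <;> ring
  rw [key]
  simp only [← Matrix.ext_iff, Fin.forall_fin_two, Matrix.cons_val_zero, Matrix.cons_val_one,
    Matrix.head_cons, Matrix.head_fin_const, Matrix.cons_val', Matrix.empty_val',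
    Matrix.cons_val_fin_one, Matrix.neg_apply, Matrix.one_fin_two, Matrix.of_apply, neg_zero]
  constructor
  · rintro (⟨⟨h11, h12⟩, h21, h22⟩ | ⟨⟨h11, h12⟩, h21, h22⟩) <;>
      field_simp at h11 h12 h21 h22
    · have h1' : (b*c*q)*(b*c*q) = a*a := by linear_combination (a - b*c*q) * h11
      have hA : a*c*(a*b)*(1 - r*p*a^2) = 0 := by
        linear_combination (a^2*b*c*r*p)*h1' + (-(a*b))*h21 + (a*c*p*q*b^2*a)*h12
      have hB : a*c*(1 - p*q*b^2) = 0 := by linear_combination -h21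
      have hC : a*b*(1 - q*r*c^2) = 0 := by linear_combination a*h12
      have hA' : (1:ℂ) - r*p*a^2 = 0 :=
        (mul_eq_zero.mp hA).resolve_left (by
          exact mul_ne_zero (mul_ne_zero ha hc) (mul_ne_zero ha hb))
      have hB' : (1:ℂ) - p*q*b^2 = 0 :=
        (mul_eq_zero.mp hB).resolve_left (mul_ne_zero ha hc)
      have hC' : (1:ℂ) - q*r*c^2 = 0 :=
        (mul_eq_zero.mp hC).resolve_left (mul_ne_zero ha hb)
      refine ⟨?_, ?_, ?_⟩ <;> field_simp
      · linear_combination hA'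
      · linear_combination hB'
      · linear_combination hC'
    · have h1' : (b*c*q)*(b*c*q) = a*a := by linear_combination -(a + b*c*q) * h11
      have hA : a*c*(a*b)*(1 - r*p*a^2) = 0 := by
        linear_combination (a^2*b*c*r*p)*h1' + (-(a*b))*h21 + (a*c*p*q*b^2*a)*h12
      have hB : a*c*(1 - p*q*b^2) = 0 := by linear_combination -h21
      have hC : a*b*(1 - q*r*c^2) = 0 := by linear_combination a*h12
      have hA' : (1:ℂ) - r*p*a^2 = 0 :=
        (mul_eq_zero.mp hA).resolve_left (by
          exact mul_ne_zero (mul_ne_zero ha hc) (mul_ne_zero ha hb))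
      have hB' : (1:ℂ) - p*q*b^2 = 0 :=
        (mul_eq_zero.mp hB).resolve_left (mul_ne_zero ha hc)
      have hC' : (1:ℂ) - q*r*c^2 = 0 :=
        (mul_eq_zero.mp hC).resolve_left (mul_ne_zero ha hb)
      refine ⟨?_, ?_, ?_⟩ <;> field_simp
      · linear_combination hA'
      · linear_combination hB'
      · linear_combination hC'
  · rintro ⟨h1, h2, h3⟩
    field_simp at h1 h2 h3
    have hq2 : (b*c*q - a)*(b*c*q + a) = 0 := by
      linear_combination (b^2*c^2*q^2)*h1 + (-(a^2))*h2 + (-(a^2*p*q*b^2))*h3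
    rcases mul_eq_zero.mp hq2 with h | h
    · -- b*c*q = a : product is -1
      right
      refine ⟨⟨?_, ?_⟩, ?_, ?_⟩ <;> field_simp
      · linear_combination -h
      · linear_combination b*h3
      · linear_combination (-(a*c))*h2
      · linear_combination (b*c - a*c^2*r)*h2 + (b^2*p)*h
    · -- b*c*q = -a : product is 1
      left
      refine ⟨⟨?_, ?_⟩, ?_, ?_⟩ <;> field_simp
      · linear_combination -h
      · linear_combination b*h3
      · linear_combination (-(a*c))*h2
      · linear_combination (-(b*c) - a*c^2*r)*h2 + (-(b^2*p))*h
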